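/- For a connected weighted graph with Laplacian Q and resistance matrix Ω, and for every link (i,j), the link resistance curvature satisfies κ_ij = lim_{t→0⁺} (1/t)·( 1 − (ρ_{t,i}^T Ω ρ_{t,j})/ω_ij ), where ρ_{t,i} := exp(−Qt)·e_i. -/

import Mathlib

open Matrix

variable {V : Type*}

/- The weighted Laplacian matrix of a weighted graph `(V, G, c)`:
`Q i i = ∑_{k ∼ i} c i k`, `Q i j = -c i j` for links `i ∼ j`, and `0` otherwise. -/
open Classical in
noncomputable def lapMatrix [Fintype V] (G : SimpleGraph V) (c : V → V → ℝ) :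
    Matrix V V ℝ :=
  Matrix.of fun i j =>
    if i = j then ∑ k, if G.Adj i k then c i k else 0
    else if G.Adj i j then -c i j else 0

/- The four Penrose equations characterizing the Moore–Penrose pseudoinverse. -/
def IsMoorePenroseInv [Fintype V] (Q Qd : Matrix V V ℝ) : Prop :=
  Q * Qd * Q = Q ∧ Qd * Q * Qd = Qd ∧ (Q * Qd)ᵀ = Q * Qd ∧ (Qd * Q)ᵀ = Qd * Q

/- The effective resistance `ω i j = (e_i - e_j)ᵀ Q† (e_i - e_j)`, computed from a
pseudoinverse `Qd` of the Laplacian. -/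
open Classical in
noncomputable def effRes [Fintype V] (Qd : Matrix V V ℝ) (i j : V) : ℝ :=
  (Pi.single i 1 - Pi.single j 1) ⬝ᵥ Qd *ᵥ (Pi.single i 1 - Pi.single j 1)

/- The node resistance curvature `p i = 1 - (1/2) ∑_{j ∼ i} c i j * ω i j`. -/
open Classical in
noncomputable def nodeCurv [Fintype V] (G : SimpleGraph V) (c : V → V → ℝ)
    (Qd : Matrix V V ℝ) (i : V) : ℝ :=
  1 - 1 / 2 * ∑ j, if G.Adj i j then c i j * effRes Qd i j else 0

/- The link resistance curvature `κ i j = 2 (p i + p j) / ω i j`. -/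
noncomputable def linkCurv [Fintype V] (G : SimpleGraph V) (c : V → V → ℝ)
    (Qd : Matrix V V ℝ) (i j : V) : ℝ :=
  2 * (nodeCurv G c Qd i + nodeCurv G c Qd j) / effRes Qd i j

/- The resistance matrix `Ω` with entries `(Ω) i j = ω i j`. -/
noncomputable def resMatrix [Fintype V] (Qd : Matrix V V ℝ) : Matrix V V ℝ :=
  Matrix.of fun i j => effRes Qd i j

lemma entry_hasDerivAt [Fintype V] [DecidableEq V] (Q : Matrix V V ℝ) (a b : V) :
    HasDerivAt (fun t : ℝ => NormedSpace.exp (-(t • Q)) a b) (-(Q a b)) 0 := by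
  letI : SeminormedRing (Matrix V V ℝ) := Matrix.linftyOpSemiNormedRing
  letI : NormedRing (Matrix V V ℝ) := Matrix.linftyOpNormedRing
  letI : NormedAlgebra ℝ (Matrix V V ℝ) := Matrix.linftyOpNormedAlgebra
  have h : HasDerivAt (fun t : ℝ => NormedSpace.exp (-(t • Q))) (-Q) 0 := by
    have h := hasDerivAt_exp_smul_const (𝕂 := ℝ) (-Q) (0:ℝ)
    simp only [zero_smul, NormedSpace.exp_zero, one_mul] at h
    have he : (fun t : ℝ => NormedSpace.exp (-(t • Q)))
        = fun t : ℝ => NormedSpace.exp (t • -Q) := by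
      funext t; rw [smul_neg]
    rw [he]; exact h
  let L : Matrix V V ℝ →ₗ[ℝ] ℝ :=
    { toFun := fun M => M a b, map_add' := fun _ _ => rfl, map_smul' := fun _ _ => rfl }
  have hL := (LinearMap.toContinuousLinearMap L).hasFDerivAt
    (x := NormedSpace.exp (-((0:ℝ) • Q)))
  have := hL.comp_hasDerivAt 0 h
  exact this

lemma lap_decomp [Fintype V] [DecidableEq V] (G : SimpleGraph V) [DecidableRel G.Adj]
    (c : V → V → ℝ) (a k : V) :
    lapMatrix G c a k = (if a = k then ∑ m, (if G.Adj a m then c a m else 0) else 0)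
      - (if G.Adj a k then c a k else 0) := by
  unfold lapMatrix
  simp only [Matrix.of_apply]
  by_cases h1 : a = k
  · subst h1
    simp only [if_pos rfl, if_neg (G.irrefl), sub_zero]
    exact Finset.sum_congr rfl fun k _ => by split_ifs <;> rfl
  · simp only [if_neg h1, zero_sub]
    by_cases h2 : G.Adj a k
    · simp [h2]
    · simp [h2]

lemma lap_symm [Fintype V] [DecidableEq V] (G : SimpleGraph V) [DecidableRel G.Adj]
    (c : V → V → ℝ) (hsymm : ∀ i j, c i j = c j i) (a b : V) :
    lapMatrix G c a b = lapMatrix G c b a := by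
  rw [lap_decomp, lap_decomp]
  by_cases h1 : a = b
  · subst h1; rfl
  · simp only [if_neg h1, if_neg (Ne.symm h1)]
    by_cases h2 : G.Adj a b
    · rw [if_pos h2, if_pos (h2.symm), hsymm]
    · rw [if_neg h2, if_neg (fun h => h2 h.symm)]

lemma lap_row_sum [Fintype V] [DecidableEq V] (G : SimpleGraph V) [DecidableRel G.Adj]
    (c : V → V → ℝ) (a : V) : ∑ k, lapMatrix G c a k = 0 := by
  simp only [lap_decomp G c a, Finset.sum_sub_distrib]
  rw [Finset.sum_ite_eq Finset.univ a (fun _ => ∑ m, (if G.Adj a m then c a m else 0))]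
  simp

lemma lap_quad [Fintype V] [DecidableEq V] (G : SimpleGraph V) [DecidableRel G.Adj]
    (c : V → V → ℝ) (hsymm : ∀ i j, c i j = c j i) (x : V → ℝ) :
    x ⬝ᵥ lapMatrix G c *ᵥ x
      = (1/2) * ∑ a, ∑ b, (if G.Adj a b then c a b * (x a - x b)^2 else 0) := by
  have hLHS : x ⬝ᵥ lapMatrix G c *ᵥ x
      = ∑ a, ∑ b, ((if G.Adj a b then c a b else 0) * (x a)^2
          - (if G.Adj a b then c a b else 0) * (x a * x b)) := by
    simp only [dotProduct, Matrix.mulVec, dotProduct, Finset.mul_sum]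
    refine Finset.sum_congr rfl fun a _ => ?_
    have h1 : ∀ i, x a * (lapMatrix G c a i * x i)
        = (if a = i then (∑ m, (if G.Adj a m then c a m else 0)) * (x a * x i) else 0)
          - (if G.Adj a i then c a i else 0) * (x a * x i) := by
      intro i; rw [lap_decomp]
      by_cases h : a = i
      · subst h; by_cases h2 : G.Adj a a <;> simp [h2] <;> ring
      · simp only [if_neg h, if_pos, zero_sub]
        by_cases h2 : G.Adj a i <;> simp [h2] <;> ring
    simp only [h1, Finset.sum_sub_distrib, Finset.sum_ite_eq, Finset.mem_univ, if_true]
    rw [← Finset.sum_mul]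
    ring
  rw [hLHS]
  have hswap : ∑ a, ∑ b, (if G.Adj a b then c a b else 0) * (x b)^2
      = ∑ a, ∑ b, (if G.Adj a b then c a b else 0) * (x a)^2 := by
    rw [Finset.sum_comm]
    refine Finset.sum_congr rfl fun a _ => Finset.sum_congr rfl fun b _ => ?_
    by_cases h : G.Adj b a
    · rw [if_pos h, if_pos h.symm, hsymm b a]
    · rw [if_neg h, if_neg fun h' => h h'.symm]
  have hpt : ∀ a b : V, (if G.Adj a b then c a b * (x a - x b)^2 else 0)
      = (if G.Adj a b then c a b else 0) * (x a)^2 + (if G.Adj a b then c a b else 0) * (x b)^2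
        - 2 * ((if G.Adj a b then c a b else 0) * (x a * x b)) := by
    intro a b; by_cases h : G.Adj a b <;> simp [h] <;> ring
  simp only [hpt, Finset.sum_sub_distrib, Finset.sum_add_distrib, ← Finset.mul_sum]
  rw [hswap]
  ring

lemma const_of_quad_zero [Fintype V] [DecidableEq V] (G : SimpleGraph V) [DecidableRel G.Adj]
    (c : V → V → ℝ) (hsymm : ∀ i j, c i j = c j i)
    (hpos : ∀ i j, G.Adj i j → 0 < c i j) (hconn : G.Connected) (x : V → ℝ)
    (hx : x ⬝ᵥ lapMatrix G c *ᵥ x = 0) (a b : V) : x a = x b := by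
  have hterm : ∀ p q : V, G.Adj p q → x p = x q := by
    intro p q hpq
    rw [lap_quad G c hsymm] at hx
    have hnn : ∀ u ∈ (Finset.univ : Finset V),
        (0:ℝ) ≤ ∑ w, (if G.Adj u w then c u w * (x u - x w)^2 else 0) := by
      intro u _
      refine Finset.sum_nonneg fun w _ => ?_
      split_ifs with h
      · exact mul_nonneg (hpos u w h).le (sq_nonneg _)
      · exact le_refl 0
    have hx' : ∑ a, ∑ b, (if G.Adj a b then c a b * (x a - x b)^2 else 0) = (0:ℝ) := by
      linarith
    have hrow := (Finset.sum_eq_zero_iff_of_nonneg hnn).mp hx' p (Finset.mem_univ p)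
    have hnn2 : ∀ w ∈ (Finset.univ : Finset V),
        (0:ℝ) ≤ (if G.Adj p w then c p w * (x p - x w)^2 else 0) := by
      intro w _
      split_ifs with h
      · exact mul_nonneg (hpos p w h).le (sq_nonneg _)
      · exact le_refl 0
    have hone := (Finset.sum_eq_zero_iff_of_nonneg hnn2).mp hrow q (Finset.mem_univ q)
    rw [if_pos hpq] at hone
    have hsq : (x p - x q)^2 = 0 := by
      rcases mul_eq_zero.mp hone with h | h
      · exact absurd h (ne_of_gt (hpos p q hpq))
      · exact h
    have := pow_eq_zero_iff (n := 2) (by norm_num) |>.mp hsq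
    linarith [this]
  obtain ⟨w⟩ := hconn.preconnected a b
  induction w with
  | nil => rfl
  | cons h p ih => exact (hterm _ _ h).trans ih

lemma mulVec_eq_zero_of_const [Fintype V] [DecidableEq V] (G : SimpleGraph V)
    [DecidableRel G.Adj] (c : V → V → ℝ) (x : V → ℝ) (hx : ∀ a b, x a = x b) :
    lapMatrix G c *ᵥ x = 0 := by
  funext a
  simp only [Matrix.mulVec, dotProduct, Pi.zero_apply]
  rw [Finset.sum_congr rfl fun k _ => by rw [hx k a], ← Finset.sum_mul, lap_row_sum, zero_mul]

lemma mp_unique [Fintype V] [DecidableEq V] (A B C : Matrix V V ℝ)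
    (hB : IsMoorePenroseInv A B) (hC : IsMoorePenroseInv A C) : B = C := by
  obtain ⟨b1, b2, b3, b4⟩ := hB
  obtain ⟨c1, c2, c3, c4⟩ := hC
  have hBA : B * A = C * A := by
    calc B * A = (B * A)ᵀ := b4.symm
      _ = Aᵀ * Bᵀ := by rw [Matrix.transpose_mul]
      _ = (A * C * A)ᵀ * Bᵀ := by rw [c1]
      _ = (Aᵀ * Cᵀ) * (Aᵀ * Bᵀ) := by simp only [Matrix.transpose_mul, Matrix.mul_assoc]
      _ = (C * A)ᵀ * (B * A)ᵀ := by simp only [Matrix.transpose_mul]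
      _ = (C * A) * (B * A) := by rw [c4, b4]
      _ = C * (A * B * A) := by simp only [Matrix.mul_assoc]
      _ = C * A := by rw [b1]
  have hAB : A * B = A * C := by
    calc A * B = (A * B)ᵀ := b3.symm
      _ = Bᵀ * Aᵀ := by rw [Matrix.transpose_mul]
      _ = Bᵀ * (A * C * A)ᵀ := by rw [c1]
      _ = (Bᵀ * Aᵀ) * (Cᵀ * Aᵀ) := by simp only [Matrix.transpose_mul, Matrix.mul_assoc]
      _ = (A * B)ᵀ * (A * C)ᵀ := by simp only [Matrix.transpose_mul]
      _ = (A * B) * (A * C) := by rw [b3, c3]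
      _ = (A * B * A) * C := by simp only [Matrix.mul_assoc]
      _ = A * C := by rw [b1]
  calc B = B * A * B := b2.symm
    _ = C * A * B := by rw [hBA]
    _ = C * (A * C) := by rw [Matrix.mul_assoc, hAB]
    _ = C := by rw [← Matrix.mul_assoc, c2]

lemma mp_transpose [Fintype V] [DecidableEq V] (A B : Matrix V V ℝ) (hA : Aᵀ = A)
    (hB : IsMoorePenroseInv A B) : IsMoorePenroseInv A Bᵀ := by
  obtain ⟨b1, b2, b3, b4⟩ := hB
  have key3 : A * Bᵀ = B * A := by
    calc A * Bᵀ = Aᵀ * Bᵀ := by rw [hA]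
      _ = (B * A)ᵀ := (Matrix.transpose_mul _ _).symm
      _ = B * A := b4
  have key4 : Bᵀ * A = A * B := by
    calc Bᵀ * A = Bᵀ * Aᵀ := by rw [hA]
      _ = (A * B)ᵀ := (Matrix.transpose_mul _ _).symm
      _ = A * B := b3
  refine ⟨?_, ?_, ?_, ?_⟩
  · have h := congrArg Matrix.transpose b1
    simp only [Matrix.transpose_mul, hA] at h
    calc A * Bᵀ * A = A * (Bᵀ * A) := by rw [Matrix.mul_assoc]
      _ = A := by rw [← Matrix.mul_assoc] at h ⊢; exact h
  · have h := congrArg Matrix.transpose b2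
    simp only [Matrix.transpose_mul, hA] at h
    calc Bᵀ * A * Bᵀ = Bᵀ * (A * Bᵀ) := by rw [Matrix.mul_assoc]
      _ = Bᵀ := by rw [← Matrix.mul_assoc] at h ⊢; exact h
  · rw [key3]; exact b4
  · rw [key4]; exact b3

/- STATEMENT 13: `κ_ij = lim_{t→0⁺} (1/t)(1 - ρ_{t,i}ᵀ Ω ρ_{t,j} / ω_ij)` where
`ρ_{t,i} = exp(-Qt) e_i`. -/
theorem linkCurv_eq_limit_average_distance
    [Fintype V] [DecidableEq V] (G : SimpleGraph V) [DecidableRel G.Adj]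
    (c : V → V → ℝ) (hsymm : ∀ i j, c i j = c j i)
    (hpos : ∀ i j, G.Adj i j → 0 < c i j)
    (hconn : G.Connected)
    (Qd : Matrix V V ℝ) (hQd : IsMoorePenroseInv (lapMatrix G c) Qd)
    (i j : V) (hij : G.Adj i j) :
    Filter.Tendsto
      (fun t : ℝ =>
        1 / t * (1 -
          ((NormedSpace.exp (-(t • lapMatrix G c)) *ᵥ Pi.single i 1) ⬝ᵥ
            resMatrix Qd *ᵥ (NormedSpace.exp (-(t • lapMatrix G c)) *ᵥ Pi.single j 1)) /
          effRes Qd i j))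
      (nhdsWithin 0 (Set.Ioi 0)) (nhds (linkCurv G c Qd i j)) := by
  classical
  obtain ⟨e1, e2, e3, e4⟩ := hQd
  set Q := lapMatrix G c with hQdef
  have hQsym : Qᵀ = Q := by
    ext a b; rw [Matrix.transpose_apply]; exact lap_symm G c hsymm b a
  have hQdsym : Qdᵀ = Qd :=
    mp_unique Q Qdᵀ Qd (mp_transpose Q Qd hQsym ⟨e1, e2, e3, e4⟩) ⟨e1, e2, e3, e4⟩
  have hQs : ∀ a b, Q a b = Q b a := fun a b => lap_symm G c hsymm a b
  have hΓs : ∀ a b, Qd a b = Qd b a := by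
    intro a b
    have h := congrFun (congrFun hQdsym a) b
    rw [Matrix.transpose_apply] at h
    exact h.symm
  have hrow : ∀ a, ∑ k, Q a k = 0 := lap_row_sum G c
  have hne : i ≠ j := G.ne_of_adj hij
  set v : V → ℝ := Pi.single i 1 - Pi.single j 1 with hv
  -- step 1 : (Qd * Q) *ᵥ v = v
  have hQz : Q *ᵥ (v - (Qd * Q) *ᵥ v) = 0 := by
    rw [Matrix.mulVec_sub, Matrix.mulVec_mulVec, ← Matrix.mul_assoc, e1, sub_self]
  have hzconst : ∀ a b, (v - (Qd * Q) *ᵥ v) a = (v - (Qd * Q) *ᵥ v) b := by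
    apply const_of_quad_zero G c hsymm hpos hconn
    rw [hQz, dotProduct_zero]
  have hsumv : ∑ a, v a = 0 := by
    simp [hv, Pi.sub_apply, Pi.single_apply, Finset.sum_sub_distrib]
  have hsymQdQ : ∀ a b, (Qd * Q) a b = (Qd * Q) b a := by
    intro a b
    have h := congrFun (congrFun e4 a) b
    rw [Matrix.transpose_apply] at h
    exact h.symm
  have hcolsum : ∀ k, ∑ a, (Qd * Q) a k = 0 := by
    intro k
    calc ∑ a, (Qd * Q) a k = ∑ a, (Qd * Q) k a :=
          Finset.sum_congr rfl fun a _ => hsymQdQ a k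
      _ = ∑ a, ∑ m, Qd k m * Q m a := by simp [Matrix.mul_apply]
      _ = ∑ m, ∑ a, Qd k m * Q m a := Finset.sum_comm
      _ = ∑ m, Qd k m * (∑ a, Q m a) := by simp [Finset.mul_sum]
      _ = 0 := by simp [hrow]
  have hsumQdQ : ∑ a, ((Qd * Q) *ᵥ v) a = 0 := by
    calc ∑ a, ((Qd * Q) *ᵥ v) a = ∑ a, ∑ k, (Qd * Q) a k * v k := by
          simp [Matrix.mulVec, dotProduct]
      _ = ∑ k, ∑ a, (Qd * Q) a k * v k := Finset.sum_comm
      _ = ∑ k, (∑ a, (Qd * Q) a k) * v k := by simp [Finset.sum_mul]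
      _ = 0 := by simp [hcolsum]
  have hvv : (Qd * Q) *ᵥ v = v := by
    have hzero : ∀ a, (v - (Qd * Q) *ᵥ v) a = 0 := by
      intro a
      have hall : ∑ b, (v - (Qd * Q) *ᵥ v) b = 0 := by
        simp [Pi.sub_apply, Finset.sum_sub_distrib, hsumv, hsumQdQ]
      have hcc : ∑ b, (v - (Qd * Q) *ᵥ v) b
          = ((Finset.univ : Finset V).card : ℝ) * ((v - (Qd * Q) *ᵥ v) a) := by
        rw [Finset.sum_congr rfl fun b _ => hzconst b a, Finset.sum_const, nsmul_eq_mul]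
      rw [hcc] at hall
      have hcard : (0:ℝ) < ((Finset.univ : Finset V).card : ℝ) := by
        have : 0 < (Finset.univ : Finset V).card := Finset.card_pos.mpr ⟨i, Finset.mem_univ i⟩
        exact_mod_cast this
      rcases mul_eq_zero.mp hall with h | h
      · exact absurd h (ne_of_gt hcard)
      · exact h
    funext a
    have := hzero a
    simp only [Pi.sub_apply] at this
    linarith
  have hcomm : Q * Qd = Qd * Q := by
    calc Q * Qd = (Q * Qd)ᵀ := e3.symm
      _ = Qdᵀ * Qᵀ := by rw [Matrix.transpose_mul]
      _ = Qd * Q := by rw [hQdsym, hQsym]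
  have hPv : (Q * Qd) *ᵥ v = v := by rw [hcomm]; exact hvv
  -- the effective resistance formula
  have hres : ∀ a b, effRes Qd a b = Qd a a + Qd b b - Qd a b - Qd b a := by
    intro a b
    simp only [effRes, Matrix.mulVec_sub, Matrix.mulVec_single_one, Matrix.col_apply, sub_dotProduct,
      single_dotProduct, Pi.sub_apply, mul_one, one_mul]
    ring
  set ω := effRes Qd i j with hω
  -- ω ≠ 0
  have hωv : v ⬝ᵥ Qd *ᵥ v = ω := by
    rw [hω, hres i j, hv]
    simp only [Matrix.mulVec_sub, Matrix.mulVec_single_one, Matrix.col_apply, sub_dotProduct,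
      single_dotProduct, Pi.sub_apply, mul_one, one_mul]
    ring
  have hωw : (Qd *ᵥ v) ⬝ᵥ Q *ᵥ (Qd *ᵥ v) = ω := by
    rw [Matrix.mulVec_mulVec, hPv, dotProduct_comm]
    exact hωv
  have hvi : v i = 1 := by simp [hv, Pi.single_apply, hne]
  have hωne : ω ≠ 0 := by
    intro h0
    have hconstw := const_of_quad_zero G c hsymm hpos hconn (Qd *ᵥ v)
      (by rw [hωw]; exact h0)
    have hQw : Q *ᵥ (Qd *ᵥ v) = 0 := mulVec_eq_zero_of_const G c _ hconstw
    rw [Matrix.mulVec_mulVec, hPv] at hQw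
    have := congrFun hQw i
    rw [hvi] at this
    simpa using this
  -- the exponential entries and their derivatives
  have hexp0 : NormedSpace.exp (-((0:ℝ) • Q)) = 1 := by
    simp [NormedSpace.exp_zero]
  -- derivative of the double-sum form
  have hD : HasDerivAt
      (fun t : ℝ => ∑ k, ∑ l, NormedSpace.exp (-(t • Q)) k i *
        (resMatrix Qd k l * NormedSpace.exp (-(t • Q)) l j))
      (∑ k, ∑ l, (-(Q k i) * (resMatrix Qd k l * (1 : Matrix V V ℝ) l j)
        + (1 : Matrix V V ℝ) k i * (resMatrix Qd k l * -(Q l j)))) 0 := by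
    apply HasDerivAt.fun_sum
    intro k _
    apply HasDerivAt.fun_sum
    intro l _
    have h := (entry_hasDerivAt Q k i).mul ((entry_hasDerivAt Q l j).const_mul (resMatrix Qd k l))
    simp only [hexp0] at h
    exact h
  have hRM : ∀ a b : V, resMatrix Qd a b = effRes Qd a b := fun _ _ => rfl
  have hDval : (∑ k, ∑ l, (-(Q k i) * (resMatrix Qd k l * (1 : Matrix V V ℝ) l j)
        + (1 : Matrix V V ℝ) k i * (resMatrix Qd k l * -(Q l j))))
      = -((∑ k, Q k i * effRes Qd k j) + (∑ l, effRes Qd i l * Q l j)) := by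
    have h1 : ∀ k l : V, -(Q k i) * (resMatrix Qd k l * (1 : Matrix V V ℝ) l j)
        = if l = j then -(Q k i * effRes Qd k l) else 0 := by
      intro k l
      rw [Matrix.one_apply, hRM]
      split_ifs with h
      · ring
      · ring
    have h2 : ∀ k l : V, (1 : Matrix V V ℝ) k i * (resMatrix Qd k l * -(Q l j))
        = if k = i then -(effRes Qd k l * Q l j) else 0 := by
      intro k l
      rw [Matrix.one_apply, hRM]
      split_ifs with h
      · ring
      · ring
    calc (∑ k, ∑ l, (-(Q k i) * (resMatrix Qd k l * (1 : Matrix V V ℝ) l j)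
          + (1 : Matrix V V ℝ) k i * (resMatrix Qd k l * -(Q l j))))
        = ∑ k, ((∑ l, if l = j then -(Q k i * effRes Qd k l) else 0)
            + ∑ l, (if k = i then -(effRes Qd k l * Q l j) else 0)) := by
          refine Finset.sum_congr rfl fun k _ => ?_
          rw [← Finset.sum_add_distrib]
          exact Finset.sum_congr rfl fun l _ => by rw [h1, h2]
      _ = ∑ k, (-(Q k i * effRes Qd k j)
            + if k = i then ∑ l, -(effRes Qd k l * Q l j) else 0) := by
          refine Finset.sum_congr rfl fun k _ => ?_
          congr 1
          · exact (Finset.sum_ite_eq' Finset.univ j _).trans (by simp)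
          · split_ifs with h
            · rfl
            · simp
      _ = (∑ k, -(Q k i * effRes Qd k j)) + ∑ l, -(effRes Qd i l * Q l j) := by
          rw [Finset.sum_add_distrib]
          congr 1
          exact (Finset.sum_ite_eq' Finset.univ i _).trans (by simp)
      _ = -((∑ k, Q k i * effRes Qd k j) + (∑ l, effRes Qd i l * Q l j)) := by
          rw [Finset.sum_neg_distrib, Finset.sum_neg_distrib]
          ring
  -- node curvature rewriting
  have hnode : ∀ a : V, nodeCurv G c Qd a = 1 + 1/2 * ∑ k, Q a k * effRes Qd a k := by
    intro a
    unfold nodeCurv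
    have hpt : ∀ (k : V) (inst : Decidable (G.Adj a k)),
        (@ite _ (G.Adj a k) inst (c a k * effRes Qd a k) 0) = -(Q a k * effRes Qd a k) := by
      intro k inst
      by_cases hk : a = k
      · subst hk
        rw [if_neg G.irrefl, hres]
        ring
      · rw [hQdef, lap_decomp, if_neg hk]
        by_cases h2 : G.Adj a k
        · rw [if_pos h2, if_pos h2]
          ring
        · rw [if_neg h2, if_neg h2]
          ring
    simp only [hpt, Finset.sum_neg_distrib]
    ring
  -- matrix-entry identities
  have h5 : (Q * Qd) i i - (Q * Qd) i j = 1 := by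
    have h := congrFun hPv i
    rw [hv] at h
    simp only [Matrix.mulVec_sub, Matrix.mulVec_single_one, Matrix.col_apply, Pi.sub_apply, mul_one,
      Pi.single_apply, eq_self_iff_true, if_true] at h
    rw [if_neg hne] at h
    linarith
  have h6 : (Q * Qd) j i - (Q * Qd) j j = -1 := by
    have h := congrFun hPv j
    rw [hv] at h
    simp only [Matrix.mulVec_sub, Matrix.mulVec_single_one, Matrix.col_apply, Pi.sub_apply, mul_one,
      Pi.single_apply, eq_self_iff_true, if_true] at h
    rw [if_neg (Ne.symm hne)] at h
    linarith
  have hT1 : ∑ k, Q k i * effRes Qd k j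
      = (∑ k, Q i k * Qd k k) - 2 * (Q * Qd) i j := by
    have hpt : ∀ k, Q k i * effRes Qd k j
        = Q i k * Qd k k + Q i k * Qd j j - Q i k * Qd k j - Q i k * Qd k j := by
      intro k
      rw [hres k j, hQs k i, hΓs j k]
      ring
    rw [Finset.sum_congr rfl fun k _ => hpt k]
    simp only [Finset.sum_sub_distrib, Finset.sum_add_distrib]
    rw [← Finset.sum_mul, hrow i, zero_mul, ← Matrix.mul_apply]
    ring
  have hT2 : ∑ l, effRes Qd i l * Q l j
      = (∑ k, Q j k * Qd k k) - 2 * (Q * Qd) j i := by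
    have hpt : ∀ k, effRes Qd i k * Q k j
        = Q j k * Qd k k + Q j k * Qd i i - Q j k * Qd k i - Q j k * Qd k i := by
      intro k
      rw [hres i k, hQs k j, hΓs i k]
      ring
    rw [Finset.sum_congr rfl fun k _ => hpt k]
    simp only [Finset.sum_sub_distrib, Finset.sum_add_distrib]
    rw [← Finset.sum_mul, hrow j, zero_mul, ← Matrix.mul_apply]
    ring
  have hE3 : ∑ k, Q i k * effRes Qd i k
      = (∑ k, Q i k * Qd k k) - 2 * (Q * Qd) i i := by
    have hpt : ∀ k, Q i k * effRes Qd i k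
        = Q i k * Qd k k + Q i k * Qd i i - Q i k * Qd k i - Q i k * Qd k i := by
      intro k
      rw [hres i k, hΓs i k]
      ring
    rw [Finset.sum_congr rfl fun k _ => hpt k]
    simp only [Finset.sum_sub_distrib, Finset.sum_add_distrib]
    rw [← Finset.sum_mul, hrow i, zero_mul, ← Matrix.mul_apply]
    ring
  have hE4 : ∑ k, Q j k * effRes Qd j k
      = (∑ k, Q j k * Qd k k) - 2 * (Q * Qd) j j := by
    have hpt : ∀ k, Q j k * effRes Qd j k
        = Q j k * Qd k k + Q j k * Qd j j - Q j k * Qd k j - Q j k * Qd k j := by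
      intro k
      rw [hres j k, hΓs j k]
      ring
    rw [Finset.sum_congr rfl fun k _ => hpt k]
    simp only [Finset.sum_sub_distrib, Finset.sum_add_distrib]
    rw [← Finset.sum_mul, hrow j, zero_mul, ← Matrix.mul_apply]
    ring
  -- identify the function in the statement with the double sum
  have hfsum : ∀ t : ℝ,
      ((NormedSpace.exp (-(t • Q)) *ᵥ Pi.single i 1) ⬝ᵥ
        resMatrix Qd *ᵥ (NormedSpace.exp (-(t • Q)) *ᵥ Pi.single j 1))
      = ∑ k, ∑ l, NormedSpace.exp (-(t • Q)) k i *
          (resMatrix Qd k l * NormedSpace.exp (-(t • Q)) l j) := by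
    intro t
    rw [Matrix.mulVec_single_one, Matrix.mulVec_single_one]
    simp only [dotProduct, Matrix.mulVec, Finset.mul_sum, Matrix.col_apply]
  have hfun : (fun t : ℝ =>
      ((NormedSpace.exp (-(t • Q)) *ᵥ Pi.single i 1) ⬝ᵥ
        resMatrix Qd *ᵥ (NormedSpace.exp (-(t • Q)) *ᵥ Pi.single j 1)))
      = (fun t : ℝ => ∑ k, ∑ l, NormedSpace.exp (-(t • Q)) k i *
          (resMatrix Qd k l * NormedSpace.exp (-(t • Q)) l j)) := funext hfsum
  have hd : HasDerivAt (fun t : ℝ =>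
      ((NormedSpace.exp (-(t • Q)) *ᵥ Pi.single i 1) ⬝ᵥ
        resMatrix Qd *ᵥ (NormedSpace.exp (-(t • Q)) *ᵥ Pi.single j 1)))
      (-(2 * (nodeCurv G c Qd i + nodeCurv G c Qd j))) 0 := by
    rw [hfun]
    have hval : (∑ k, ∑ l, (-(Q k i) * (resMatrix Qd k l * (1 : Matrix V V ℝ) l j)
        + (1 : Matrix V V ℝ) k i * (resMatrix Qd k l * -(Q l j))))
        = -(2 * (nodeCurv G c Qd i + nodeCurv G c Qd j)) := by
      rw [hDval, hT1, hT2, hnode i, hnode j, hE3, hE4]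
      linarith
    rw [← hval]
    exact hD
  -- value of the function at 0
  have hf0 : ((NormedSpace.exp (-((0:ℝ) • Q)) *ᵥ Pi.single i 1) ⬝ᵥ
      resMatrix Qd *ᵥ (NormedSpace.exp (-((0:ℝ) • Q)) *ᵥ Pi.single j 1)) = ω := by
    rw [hexp0, Matrix.one_mulVec, Matrix.one_mulVec, Matrix.mulVec_single_one,
      single_dotProduct]
    simp only [mul_one, one_mul, Matrix.col_apply]
    exact (hRM i j).trans hω.symm
  -- the limit
  have hslope := hasDerivAt_iff_tendsto_slope.mp hd
  have hmono : nhdsWithin (0:ℝ) (Set.Ioi 0) ≤ nhdsWithin (0:ℝ) {(0:ℝ)}ᶜ :=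
    nhdsWithin_mono 0 fun x hx => Set.mem_compl_singleton_iff.mpr (ne_of_gt hx)
  have h2 := (hslope.mono_left hmono).const_mul (-(1/ω))
  have hlc : linkCurv G c Qd i j
      = -(1/ω) * (-(2 * (nodeCurv G c Qd i + nodeCurv G c Qd j))) := by
    unfold linkCurv
    rw [← hω]
    ring
  rw [hlc]
  refine Filter.Tendsto.congr' ?_ h2
  filter_upwards [self_mem_nhdsWithin] with t ht
  have ht0 : (t:ℝ) ≠ 0 := ne_of_gt ht
  have hgen : ∀ X : ℝ, -(1/ω) * ((X - ω)/(t - 0)) = 1/t * (1 - X/ω) := by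
    intro X
    have h1 : (ω - X)/ω = 1 - X/ω := by
      rw [sub_div, div_self hωne]
    rw [← h1, sub_zero]
    ring
  rw [slope_def_field]
  simp only [hf0]
  exact hgen _
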